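/- Suppose f ∈ H satisfies P₁f = f (in the Gibbs-sampler interpretation, f is a function of the first component only, as in data augmentation). Then for every r ∈ (0,1): V_D(f) ≤ max{2r/(2−r), 2r(1−r)}·V_R(f,r), and consequently, for every τ > 0, V_D†(f) ≤ ((τ+1)/τ)·V_R†(f,r). -/

import Mathlib

open scoped RealInnerProductSpace

noncomputable def VD {H : Type*} [NormedAddCommGroup H] [InnerProductSpace ℝ H]
    (P₁ P₂ : H →L[ℝ] H) (f : H) : ℝ :=
  ‖f‖ ^ 2
    + ∑' s : ℕ, ⟪f, ((P₁ * P₂) ^ s * P₁) f⟫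
    + ∑' s : ℕ, ⟪f, ((P₁ * P₂) ^ (s + 1)) f⟫
    + ∑' s : ℕ, ⟪f, ((P₂ * P₁) ^ s * P₂) f⟫
    + ∑' s : ℕ, ⟪f, ((P₂ * P₁) ^ (s + 1)) f⟫

noncomputable def VR {H : Type*} [NormedAddCommGroup H] [InnerProductSpace ℝ H]
    (P₁ P₂ : H →L[ℝ] H) (r : ℝ) (f : H) : ℝ :=
  ‖f‖ ^ 2 + 2 * ∑' t : ℕ, ⟪f, (((1 - r) • P₁ + r • P₂) ^ (t + 1)) f⟫

noncomputable def kOne (r : ℝ) : ℝ :=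
  1 - r + r ^ 2 + Real.sqrt (r ^ 2 * (1 - r) ^ 2 + (1 - 2 * r) ^ 2)

noncomputable def kTwo (r : ℝ) : ℝ :=
  (1 - r + r ^ 2 + Real.sqrt (r ^ 2 * (1 - r) ^ 2 + (1 - 2 * r) ^ 2)) / (2 * r * (1 - r))

noncomputable def kappa (τ r : ℝ) : ℝ := (τ + 1) / (2 * (r * τ + 1 - r))

noncomputable def VDdag {H : Type*} [NormedAddCommGroup H] [InnerProductSpace ℝ H]
    (P₁ P₂ : H →L[ℝ] H) (τ : ℝ) (f : H) : ℝ := ((1 + τ) / 2) * VD P₁ P₂ f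

noncomputable def VRdag {H : Type*} [NormedAddCommGroup H] [InnerProductSpace ℝ H]
    (P₁ P₂ : H →L[ℝ] H) (r τ : ℝ) (f : H) : ℝ := (r * τ + 1 - r) * VR P₁ P₂ r f

section auxlemmas
variable {H : Type*} [NormedAddCommGroup H] [InnerProductSpace ℝ H]

lemma aux17_sym_pow (B : H →L[ℝ] H) (hs : ∀ x y : H, ⟪B x, y⟫ = ⟪x, B y⟫) :
    ∀ (n : ℕ) (x y : H), ⟪(B ^ n) x, y⟫ = ⟪x, (B ^ n) y⟫ := by
  intro n
  induction n with
  | zero => intro x y; simp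
  | succ m ih =>
    intro x y
    calc ⟪(B ^ (m + 1)) x, y⟫ = ⟪(B ^ m) (B x), y⟫ := by
          rw [pow_succ]; simp only [ContinuousLinearMap.mul_apply]
      _ = ⟪B x, (B ^ m) y⟫ := ih _ _
      _ = ⟪x, B ((B ^ m) y)⟫ := hs _ _
      _ = ⟪x, (B ^ (m + 1)) y⟫ := by
          rw [pow_succ']; simp only [ContinuousLinearMap.mul_apply]

lemma aux17_pos_pow (B : H →L[ℝ] H) (hs : ∀ x y : H, ⟪B x, y⟫ = ⟪x, B y⟫)
    (hp : ∀ g : H, 0 ≤ ⟪g, B g⟫) : ∀ (n : ℕ) (g : H), 0 ≤ ⟪g, (B ^ n) g⟫ := by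
  intro n g
  rcases Nat.even_or_odd n with ⟨m, hm⟩ | ⟨m, hm⟩
  · subst hm
    have : (B ^ (m + m)) g = (B ^ m) ((B ^ m) g) := by
      rw [pow_add]; simp only [ContinuousLinearMap.mul_apply]
    rw [this, ← aux17_sym_pow B hs m]
    exact real_inner_self_nonneg
  · subst hm
    have e : 2 * m + 1 = m + (1 + m) := by ring
    have : (B ^ (2 * m + 1)) g = (B ^ m) (B ((B ^ m) g)) := by
      rw [e, pow_add, pow_add, pow_one]; simp only [ContinuousLinearMap.mul_apply]
    rw [this, ← aux17_sym_pow B hs m]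
    exact hp _

lemma aux17_contraction_pow (B : H →L[ℝ] H) (hc : ∀ x : H, ‖B x‖ ≤ ‖x‖) :
    ∀ (n : ℕ) (x : H), ‖(B ^ n) x‖ ≤ ‖x‖ := by
  intro n
  induction n with
  | zero => intro x; simp
  | succ m ih =>
    intro x
    have : (B ^ (m + 1)) x = (B ^ m) (B x) := by
      rw [pow_succ]; simp only [ContinuousLinearMap.mul_apply]
    rw [this]
    exact (ih (B x)).trans (hc x)

lemma aux17_cs (B : H →L[ℝ] H) (hs : ∀ x y : H, ⟪B x, y⟫ = ⟪x, B y⟫)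
    (hp : ∀ g : H, 0 ≤ ⟪g, B g⟫) (x y : H) :
    ⟪x, B y⟫ ^ 2 ≤ ⟪x, B x⟫ * ⟪y, B y⟫ := by
  have key : ∀ t : ℝ, 0 ≤ ⟪y, B y⟫ * (t * t) + (2 * ⟪x, B y⟫) * t + ⟪x, B x⟫ := by
    intro t
    have h0 := hp (x + t • y)
    have hyx : ⟪y, B x⟫ = ⟪x, B y⟫ := by
      rw [← hs y x, real_inner_comm]
    have expand : ⟪x + t • y, B (x + t • y)⟫
        = ⟪y, B y⟫ * (t * t) + (2 * ⟪x, B y⟫) * t + ⟪x, B x⟫ := by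
      rw [map_add, map_smul]
      simp only [inner_add_left, inner_add_right, real_inner_smul_left, real_inner_smul_right,
        RingHom.id_apply]
      rw [hyx]
      ring
    linarith [expand ▸ h0]
  have hd := discrim_le_zero key
  rw [discrim] at hd
  nlinarith [hd]

end auxlemmas

set_option maxHeartbeats 4000000 in
theorem stmt17 {H : Type*} [NormedAddCommGroup H] [InnerProductSpace ℝ H] [CompleteSpace H]
    (P₁ P₂ : H →L[ℝ] H)
    (h1sa : IsSelfAdjoint P₁) (h1idem : P₁ * P₁ = P₁)
    (h2sa : IsSelfAdjoint P₂) (h2idem : P₂ * P₂ = P₂)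
    (hnorm : ‖P₁ * P₂‖ < 1)
    (f : H) (hf : P₁ f = f)
    (r : ℝ) (hr : r ∈ Set.Ioo (0 : ℝ) 1) :
    VD P₁ P₂ f ≤ max (2 * r / (2 - r)) (2 * r * (1 - r)) * VR P₁ P₂ r f ∧
    (∀ τ : ℝ, 0 < τ → VDdag P₁ P₂ τ f ≤ ((τ + 1) / τ) * VRdag P₁ P₂ r τ f) := by
  obtain ⟨hr0, hr1⟩ := hr
  have hr1' : (0:ℝ) < 1 - r := by linarith
  have hrne : r ≠ 0 := ne_of_gt hr0
  have hr1ne : (1:ℝ) - r ≠ 0 := ne_of_gt hr1'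
  have h2rne : (2:ℝ) - r ≠ 0 := by intro h; linarith [h]
  -- symmetry of the projections
  have hadj1 : ContinuousLinearMap.adjoint P₁ = P₁ := ContinuousLinearMap.isSelfAdjoint_iff'.mp h1sa
  have hadj2 : ContinuousLinearMap.adjoint P₂ = P₂ := ContinuousLinearMap.isSelfAdjoint_iff'.mp h2sa
  have s₁ : ∀ x y : H, ⟪P₁ x, y⟫ = ⟪x, P₁ y⟫ := by
    intro x y; conv_lhs => rw [← hadj1]
    exact ContinuousLinearMap.adjoint_inner_left P₁ y x
  have s₂ : ∀ x y : H, ⟪P₂ x, y⟫ = ⟪x, P₂ y⟫ := by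
    intro x y; conv_lhs => rw [← hadj2]
    exact ContinuousLinearMap.adjoint_inner_left P₂ y x
  -- pointwise idempotence
  have ap1 : ∀ x : H, P₁ (P₁ x) = P₁ x := by
    intro x
    have := ContinuousLinearMap.ext_iff.mp h1idem x
    simpa [ContinuousLinearMap.mul_apply] using this
  have ap2 : ∀ x : H, P₂ (P₂ x) = P₂ x := by
    intro x
    have := ContinuousLinearMap.ext_iff.mp h2idem x
    simpa [ContinuousLinearMap.mul_apply] using this
  -- projections are contractions
  have hc1 : ∀ g : H, ‖P₁ g‖ ≤ ‖g‖ := by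
    intro g
    have h2 : ‖P₁ g‖ ^ 2 = ⟪g, P₁ g⟫ := by
      rw [← real_inner_self_eq_norm_sq, s₁, ap1]
    have h3 : ⟪g, P₁ g⟫ ≤ ‖g‖ * ‖P₁ g‖ := real_inner_le_norm g (P₁ g)
    nlinarith [norm_nonneg (P₁ g), norm_nonneg g]
  have hc2 : ∀ g : H, ‖P₂ g‖ ≤ ‖g‖ := by
    intro g
    have h2 : ‖P₂ g‖ ^ 2 = ⟪g, P₂ g⟫ := by
      rw [← real_inner_self_eq_norm_sq, s₂, ap2]
    have h3 : ⟪g, P₂ g⟫ ≤ ‖g‖ * ‖P₂ g‖ := real_inner_le_norm g (P₂ g)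
    nlinarith [norm_nonneg (P₂ g), norm_nonneg g]
  -- the operator T = P₁ P₂ P₁
  set T : H →L[ℝ] H := P₁ * P₂ * P₁ with hT
  have hTP1 : T * P₁ = T := by
    rw [hT, mul_assoc (P₁ * P₂) P₁ P₁, h1idem]
  have hP1T : P₁ * T = T := by
    rw [hT]; simp only [← mul_assoc]; rw [h1idem]
  have hTpowP1 : ∀ n : ℕ, T ^ (n+1) * P₁ = T ^ (n+1) := by
    intro n; rw [pow_succ, mul_assoc, hTP1]
  have hP1Tpow : ∀ n : ℕ, P₁ * T ^ (n+1) = T ^ (n+1) := by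
    intro n; rw [pow_succ', ← mul_assoc, hP1T]
  have hTapp : ∀ x : H, T x = P₁ (P₂ (P₁ x)) := by
    intro x; rw [hT]; simp only [ContinuousLinearMap.mul_apply]
  -- word identities
  have L1 : ∀ s : ℕ, (P₁ * P₂) ^ s * P₁ = T ^ s * P₁ := by
    intro s
    induction s with
    | zero => simp
    | succ m ih =>
      calc (P₁ * P₂) ^ (m+1) * P₁ = (P₁ * P₂) ^ m * (P₁ * (P₂ * P₁)) := by
            rw [pow_succ, mul_assoc, mul_assoc]
        _ = ((P₁ * P₂) ^ m * P₁) * (P₂ * P₁) := by rw [← mul_assoc]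
        _ = (T ^ m * P₁) * (P₂ * P₁) := by rw [ih]
        _ = T ^ m * (P₁ * P₂ * P₁) := by rw [mul_assoc, ← mul_assoc P₁ P₂ P₁]
        _ = T ^ (m+1) := by rw [← hT, ← pow_succ]
        _ = T ^ (m+1) * P₁ := (hTpowP1 m).symm
  have L2 : ∀ s : ℕ, P₁ * ((P₂ * P₁) ^ s * P₂) * P₁ = T ^ (s+1) := by
    intro s
    induction s with
    | zero => rw [pow_zero, one_mul, ← hT, pow_one]
    | succ m ih =>
      have ih' : P₁ * ((P₂ * P₁) ^ m * (P₂ * P₁)) = T ^ (m+1) := by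
        simpa only [mul_assoc] using ih
      calc P₁ * ((P₂ * P₁) ^ (m+1) * P₂) * P₁
          = P₁ * (P₂ * (P₁ * ((P₂ * P₁) ^ m * (P₂ * P₁)))) := by
            rw [pow_succ']; simp only [mul_assoc]
        _ = P₁ * (P₂ * T ^ (m+1)) := by rw [ih']
        _ = P₁ * (P₂ * (P₁ * T ^ (m+1))) := by rw [hP1Tpow]
        _ = (P₁ * P₂ * P₁) * T ^ (m+1) := by simp only [mul_assoc]
        _ = T ^ (m+1+1) := by rw [← hT, ← pow_succ']
  have L3 : ∀ s : ℕ, P₁ * (P₁ * P₂) ^ (s+1) * P₁ = T ^ (s+1) := by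
    intro s
    rw [mul_assoc, L1 (s+1), hTpowP1 s, hP1Tpow s]
  have L4 : ∀ s : ℕ, P₁ * (P₂ * P₁) ^ (s+1) * P₁ = T ^ (s+1) := by
    intro s
    have e : (P₂ * P₁) ^ (s+1) = ((P₂ * P₁) ^ s * P₂) * P₁ := by
      rw [pow_succ, ← mul_assoc]
    rw [e]
    simp only [mul_assoc, h1idem]
    have h := L2 s
    simp only [mul_assoc] at h
    exact h
  -- sandwich lemma
  have sand : ∀ X : H →L[ℝ] H, ⟪f, X f⟫ = ⟪f, (P₁ * X * P₁) f⟫ := by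
    intro X
    have h1 : (P₁ * X * P₁) f = P₁ (X f) := by
      simp only [ContinuousLinearMap.mul_apply, hf]
    rw [h1, ← s₁, hf]
  -- the sequence a
  set a : ℕ → ℝ := fun s => ⟪f, (T ^ s) f⟫ with ha
  have t1 : ∀ s : ℕ, ⟪f, ((P₁ * P₂) ^ s * P₁) f⟫ = a s := by
    intro s
    rw [L1 s]
    simp only [ha, ContinuousLinearMap.mul_apply, hf]
  have t2 : ∀ s : ℕ, ⟪f, ((P₁ * P₂) ^ (s+1)) f⟫ = a (s+1) := by
    intro s; rw [sand ((P₁ * P₂) ^ (s+1)), L3 s]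
  have t3 : ∀ s : ℕ, ⟪f, ((P₂ * P₁) ^ s * P₂) f⟫ = a (s+1) := by
    intro s; rw [sand ((P₂ * P₁) ^ s * P₂), L2 s]
  have t4 : ∀ s : ℕ, ⟪f, ((P₂ * P₁) ^ (s+1)) f⟫ = a (s+1) := by
    intro s; rw [sand ((P₂ * P₁) ^ (s+1)), L4 s]
  -- symmetry and positivity of T
  have sT : ∀ x y : H, ⟪T x, y⟫ = ⟪x, T y⟫ := by
    intro x y
    rw [hTapp, hTapp, s₁, s₂, s₁]
  have hTpos : ∀ g : H, 0 ≤ ⟪g, T g⟫ := by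
    intro g
    calc (0:ℝ) ≤ ⟪P₂ (P₁ g), P₂ (P₁ g)⟫ := real_inner_self_nonneg
      _ = ⟪P₁ g, P₂ (P₂ (P₁ g))⟫ := s₂ _ _
      _ = ⟪P₁ g, P₂ (P₁ g)⟫ := by rw [ap2]
      _ = ⟪g, P₁ (P₂ (P₁ g))⟫ := s₁ _ _
      _ = ⟪g, T g⟫ := by rw [← hTapp]
  have ha_nonneg : ∀ s, 0 ≤ a s := by
    intro s; simp only [ha]; exact aux17_pos_pow T sT hTpos s f
  -- geometric bounds
  have hq0 : (0:ℝ) ≤ ‖P₁ * P₂‖ := norm_nonneg _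
  have hTc : ∀ x : H, ‖T x‖ ≤ ‖P₁ * P₂‖ * ‖x‖ := by
    intro x
    have h1 : T x = (P₁ * P₂) (P₁ x) := by
      rw [hTapp]; simp only [ContinuousLinearMap.mul_apply]
    rw [h1]
    calc ‖(P₁ * P₂) (P₁ x)‖ ≤ ‖P₁ * P₂‖ * ‖P₁ x‖ := (P₁ * P₂).le_opNorm (P₁ x)
      _ ≤ ‖P₁ * P₂‖ * ‖x‖ := mul_le_mul_of_nonneg_left (hc1 x) hq0
  have hTnf : ∀ n : ℕ, ‖(T ^ n) f‖ ≤ ‖f‖ * ‖P₁ * P₂‖ ^ n := by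
    intro n
    induction n with
    | zero => simp
    | succ m ih =>
      have h1 : (T ^ (m+1)) f = T ((T ^ m) f) := by
        rw [pow_succ']; simp only [ContinuousLinearMap.mul_apply]
      rw [h1]
      calc ‖T ((T ^ m) f)‖ ≤ ‖P₁ * P₂‖ * ‖(T ^ m) f‖ := hTc _
        _ ≤ ‖P₁ * P₂‖ * (‖f‖ * ‖P₁ * P₂‖ ^ m) := mul_le_mul_of_nonneg_left ih hq0
        _ = ‖f‖ * ‖P₁ * P₂‖ ^ (m+1) := by ring
  have hsumTf : Summable (fun n : ℕ => (T ^ n) f) := by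
    exact Summable.of_norm_bounded
      ((summable_geometric_of_lt_one hq0 hnorm).mul_left ‖f‖) hTnf
  have hab : ∀ s : ℕ, a s ≤ ‖f‖ ^ 2 * ‖P₁ * P₂‖ ^ s := by
    intro s
    have h1 : a s ≤ ‖f‖ * ‖(T ^ s) f‖ := by
      simp only [ha]; exact real_inner_le_norm _ _
    have h2 := hTnf s
    nlinarith [norm_nonneg f, norm_nonneg ((T ^ s) f), pow_nonneg hq0 s]
  have hsum_a : Summable a :=
    Summable.of_nonneg_of_le ha_nonneg hab
      ((summable_geometric_of_lt_one hq0 hnorm).mul_left _)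
  have hsum_a1 : Summable (fun s => a (s+1)) := (summable_nat_add_iff 1).mpr hsum_a
  set Sa : ℝ := ∑' s, a (s+1) with hSa
  have hSann : 0 ≤ Sa := by
    rw [hSa]; exact tsum_nonneg (fun s => ha_nonneg _)
  have ha0 : a 0 = ‖f‖ ^ 2 := by
    simp only [ha, pow_zero, ContinuousLinearMap.one_apply, real_inner_self_eq_norm_sq]
  -- value of VD
  have hVD : VD P₁ P₂ f = 2 * ‖f‖ ^ 2 + 4 * Sa := by
    have q1 : ∑' s : ℕ, ⟪f, ((P₁ * P₂) ^ s * P₁) f⟫ = ‖f‖ ^ 2 + Sa := by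
      rw [tsum_congr t1, Summable.tsum_eq_zero_add hsum_a, ha0, hSa]
    have q2 : ∑' s : ℕ, ⟪f, ((P₁ * P₂) ^ (s+1)) f⟫ = Sa := by
      rw [tsum_congr t2, hSa]
    have q3 : ∑' s : ℕ, ⟪f, ((P₂ * P₁) ^ s * P₂) f⟫ = Sa := by
      rw [tsum_congr t3, hSa]
    have q4 : ∑' s : ℕ, ⟪f, ((P₂ * P₁) ^ (s+1)) f⟫ = Sa := by
      rw [tsum_congr t4, hSa]
    rw [VD, q1, q2, q3, q4]; ring
  -- the random scan operator
  set A : H →L[ℝ] H := (1 - r) • P₁ + r • P₂ with hA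
  have apA : ∀ x : H, A x = (1 - r) • P₁ x + r • P₂ x := by
    intro x; rw [hA]
    simp only [ContinuousLinearMap.add_apply, ContinuousLinearMap.coe_smul', Pi.smul_apply]
  have sA : ∀ x y : H, ⟪A x, y⟫ = ⟪x, A y⟫ := by
    intro x y; rw [apA, apA]
    simp only [inner_add_left, inner_add_right, real_inner_smul_left, real_inner_smul_right,
      s₁, s₂]
  have hApos : ∀ g : H, 0 ≤ ⟪g, A g⟫ := by
    intro g; rw [apA]
    simp only [inner_add_right, real_inner_smul_right]
    have h1 : (0:ℝ) ≤ ⟪g, P₁ g⟫ := by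
      calc (0:ℝ) ≤ ⟪P₁ g, P₁ g⟫ := real_inner_self_nonneg
        _ = ⟪g, P₁ (P₁ g)⟫ := s₁ _ _
        _ = ⟪g, P₁ g⟫ := by rw [ap1]
    have h2 : (0:ℝ) ≤ ⟪g, P₂ g⟫ := by
      calc (0:ℝ) ≤ ⟪P₂ g, P₂ g⟫ := real_inner_self_nonneg
        _ = ⟪g, P₂ (P₂ g)⟫ := s₂ _ _
        _ = ⟪g, P₂ g⟫ := by rw [ap2]
    have := mul_nonneg (le_of_lt hr1') h1
    have := mul_nonneg (le_of_lt hr0) h2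
    linarith
  have hAcon : ∀ x : H, ‖A x‖ ≤ ‖x‖ := by
    intro x; rw [apA]
    calc ‖(1-r) • P₁ x + r • P₂ x‖ ≤ ‖(1-r) • P₁ x‖ + ‖r • P₂ x‖ := norm_add_le _ _
      _ = (1-r) * ‖P₁ x‖ + r * ‖P₂ x‖ := by
          rw [norm_smul, norm_smul, Real.norm_eq_abs, Real.norm_eq_abs,
            abs_of_pos hr1', abs_of_pos hr0]
      _ ≤ (1-r) * ‖x‖ + r * ‖x‖ := by
          have h1 := hc1 x; have h2 := hc2 x; nlinarith
      _ = ‖x‖ := by ring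
  -- the geometric vector and the solution hh of (I - A) hh = f
  set gv : H := ∑' n : ℕ, (T ^ n) f with hgv
  have hsumTf1 : Summable (fun n : ℕ => (T ^ (n+1)) f) := (summable_nat_add_iff 1).mpr hsumTf
  have hgv1 : P₁ gv = gv := by
    rw [hgv, P₁.map_tsum hsumTf]
    refine tsum_congr ?_
    intro n
    cases n with
    | zero => simp [hf]
    | succ m =>
      have := ContinuousLinearMap.ext_iff.mp (hP1Tpow m) f
      simpa [ContinuousLinearMap.mul_apply] using this
  have hTgv : T gv = ∑' n : ℕ, (T ^ (n+1)) f := by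
    rw [hgv, T.map_tsum hsumTf]
    exact tsum_congr fun n => by
      rw [pow_succ']; simp only [ContinuousLinearMap.mul_apply]
  have hgvT : gv - T gv = f := by
    rw [hTgv, hgv, Summable.tsum_eq_zero_add hsumTf]
    simp
  have hinner_gvT : ⟪f, T gv⟫ = Sa := by
    have hmap : ⟪f, ∑' n : ℕ, (T ^ (n+1)) f⟫ = ∑' n : ℕ, ⟪f, (T ^ (n+1)) f⟫ := by
      simpa using (innerSL ℝ f).map_tsum hsumTf1
    rw [hTgv, hmap, hSa]
  set c : ℝ := (r * (1 - r))⁻¹ with hc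
  have hcpos : 0 < c := by
    rw [hc]; exact inv_pos.mpr (mul_pos hr0 hr1')
  set z : H := c • gv with hz
  have hz1 : P₁ z = z := by rw [hz, map_smul, hgv1]
  set w : H := P₂ z with hw
  have hP2w : P₂ w = w := by rw [hw, ap2]
  have hPw : P₁ w = T z := by
    rw [hw, hTapp, hz1]
  have hzTz : z - T z = c • f := by
    rw [hz, map_smul, ← smul_sub, hgvT]
  have hkey : w - P₂ (P₁ w) = c • P₂ f := by
    rw [hPw, hw, ← map_sub, hzTz, map_smul]
  have hpp : P₂ (P₁ w) = w - c • P₂ f := by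
    rw [← hkey]; abel
  set hh : H := r⁻¹ • f + P₁ w + r • (w - P₁ w) with hhh
  have e1 : P₁ hh = r⁻¹ • f + P₁ w := by
    rw [hhh]
    simp only [map_add, map_smul, map_sub, hf, ap1, sub_self, smul_zero, add_zero]
  have e2 : P₂ hh = r⁻¹ • P₂ f + (w - c • P₂ f) + r • (w - (w - c • P₂ f)) := by
    rw [hhh]
    simp only [map_add, map_smul, map_sub, hP2w, hpp]
  have hAh : hh - ((1 - r) • P₁ hh + r • P₂ hh) = f := by
    rw [e1, e2, hhh, hc]
    match_scalars <;> (field_simp; try ring)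
  have hAfix : A hh = hh - f := by
    have happ : A hh = (1 - r) • P₁ hh + r • P₂ hh := apA hh
    rw [happ, ← hAh]
    abel
  have key2 : ∀ n : ℕ, (A ^ n) hh = hh - ∑ t ∈ Finset.range n, (A ^ t) f := by
    intro n
    induction n with
    | zero => simp
    | succ m ih =>
      have h1 : (A ^ (m+1)) hh = (A ^ m) (A hh) := by
        rw [pow_succ]; simp only [ContinuousLinearMap.mul_apply]
      rw [h1, hAfix, map_sub, ih, Finset.sum_range_succ]
      abel
  set u : ℕ → ℝ := fun t => ⟪f, (A ^ t) f⟫ with hu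
  have hpartial : ∀ n : ℕ, ∑ t ∈ Finset.range n, u t = ⟪f, hh⟫ - ⟪f, (A ^ n) hh⟫ := by
    intro n
    rw [key2 n, inner_sub_right, inner_sum]
    simp only [hu]
    ring
  have hunn : ∀ t, 0 ≤ u t := by
    intro t; simp only [hu]; exact aux17_pos_pow A sA hApos t f
  have hub : ∀ n, ∑ t ∈ Finset.range n, u t ≤ ⟪f, hh⟫ + ‖f‖ * ‖hh‖ := by
    intro n
    have h2 : |⟪f, (A ^ n) hh⟫| ≤ ‖f‖ * ‖hh‖ := by
      calc |⟪f, (A ^ n) hh⟫| ≤ ‖f‖ * ‖(A ^ n) hh‖ := abs_real_inner_le_norm _ _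
        _ ≤ ‖f‖ * ‖hh‖ :=
            mul_le_mul_of_nonneg_left (aux17_contraction_pow A hAcon n hh) (norm_nonneg f)
    rw [hpartial n]
    have := abs_le.mp h2
    linarith [this.1, this.2]
  have hsumu : Summable u := summable_of_sum_range_le hunn hub
  have hu0 : Filter.Tendsto u Filter.atTop (nhds 0) := hsumu.tendsto_atTop_zero
  have heps : Filter.Tendsto (fun n => ⟪f, (A ^ n) hh⟫) Filter.atTop (nhds 0) := by
    apply squeeze_zero_norm (a := fun n => Real.sqrt (u n * ‖hh‖ ^ 2))
    · intro n
      have hcs := aux17_cs (A ^ n) (aux17_sym_pow A sA n) (aux17_pos_pow A sA hApos n) f hh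
      have h3 : ⟪hh, (A ^ n) hh⟫ ≤ ‖hh‖ ^ 2 := by
        calc ⟪hh, (A ^ n) hh⟫ ≤ ‖hh‖ * ‖(A ^ n) hh‖ := real_inner_le_norm _ _
          _ ≤ ‖hh‖ * ‖hh‖ :=
              mul_le_mul_of_nonneg_left (aux17_contraction_pow A hAcon n hh) (norm_nonneg _)
          _ = ‖hh‖ ^ 2 := by ring
      have h4 : ⟪f, (A ^ n) hh⟫ ^ 2 ≤ u n * ‖hh‖ ^ 2 := by
        have hun : u n = ⟪f, (A ^ n) f⟫ := by simp only [hu]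
        nlinarith [hcs, h3, hunn n, aux17_pos_pow A sA hApos n f]
      rw [Real.norm_eq_abs, ← Real.sqrt_sq_eq_abs]
      exact Real.sqrt_le_sqrt h4
    · have h5 : Filter.Tendsto (fun n => u n * ‖hh‖ ^ 2) Filter.atTop (nhds 0) := by
        simpa using hu0.mul_const (‖hh‖ ^ 2)
      have h6 := (Real.continuous_sqrt.tendsto 0).comp h5
      simpa only [Function.comp_def, Real.sqrt_zero] using h6
  have htsumu : ∑' t, u t = ⟪f, hh⟫ := by
    have h1 := hsumu.hasSum.tendsto_sum_nat
    have h2 : Filter.Tendsto (fun n => ∑ t ∈ Finset.range n, u t) Filter.atTop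
        (nhds (⟪f, hh⟫)) := by
      have heq : (fun n => ∑ t ∈ Finset.range n, u t)
          = fun n => ⟪f, hh⟫ - ⟪f, (A ^ n) hh⟫ := funext hpartial
      rw [heq]
      simpa using tendsto_const_nhds.sub heps
    exact tendsto_nhds_unique h1 h2
  have hu0val : u 0 = ‖f‖ ^ 2 := by
    simp only [hu, pow_zero, ContinuousLinearMap.one_apply, real_inner_self_eq_norm_sq]
  have htail : ∑' t, u (t+1) = ⟪f, hh⟫ - ‖f‖ ^ 2 := by
    have h1 := Summable.tsum_eq_zero_add hsumu
    rw [htsumu, hu0val] at h1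
    linarith
  have hfh : ⟪f, hh⟫ = r⁻¹ * ‖f‖ ^ 2 + c * Sa := by
    have hfw : ⟪f, P₁ w⟫ = ⟪f, w⟫ := by rw [← s₁, hf]
    have hfw2 : ⟪f, P₁ w⟫ = c * Sa := by
      rw [hPw, hz, map_smul, real_inner_smul_right, hinner_gvT]
    rw [hhh]
    simp only [inner_add_right, inner_sub_right, real_inner_smul_right]
    rw [← hfw, hfw2, real_inner_self_eq_norm_sq]
    ring
  have hVRval : VR P₁ P₂ r f = (2 - r)/r * ‖f‖ ^ 2 + (2 * c) * Sa := by
    rw [VR]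
    simp only [← hA]
    have hcg : ∑' t : ℕ, ⟪f, (A ^ (t+1)) f⟫ = ∑' t, u (t+1) :=
      tsum_congr fun t => by simp only [hu]
    rw [hcg, htail, hfh]
    field_simp
    ring
  have ht1 : (0:ℝ) ≤ (2 - r)/r * ‖f‖ ^ 2 :=
    mul_nonneg (div_nonneg (by linarith) hr0.le) (sq_nonneg _)
  have ht2 : (0:ℝ) ≤ (2 * c) * Sa := mul_nonneg (by linarith) hSann
  have hVRnn : 0 ≤ VR P₁ P₂ r f := by
    rw [hVRval]; exact add_nonneg ht1 ht2
  have main : VD P₁ P₂ f ≤ max (2 * r / (2 - r)) (2 * r * (1 - r)) * VR P₁ P₂ r f := by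
    have hM1 : 2*r/(2-r) ≤ max (2 * r / (2 - r)) (2 * r * (1 - r)) := le_max_left _ _
    have hM2 : 2*r*(1-r) ≤ max (2 * r / (2 - r)) (2 * r * (1 - r)) := le_max_right _ _
    have heq : (2*r/(2-r)) * ((2 - r)/r * ‖f‖ ^ 2) + (2*r*(1-r)) * ((2 * c) * Sa)
        = 2 * ‖f‖ ^ 2 + 4 * Sa := by
      rw [hc]; field_simp; ring
    calc VD P₁ P₂ f = 2 * ‖f‖ ^ 2 + 4 * Sa := hVD
      _ = (2*r/(2-r)) * ((2 - r)/r * ‖f‖ ^ 2) + (2*r*(1-r)) * ((2 * c) * Sa) := heq.symm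
      _ ≤ max (2 * r / (2 - r)) (2 * r * (1 - r)) * ((2 - r)/r * ‖f‖ ^ 2)
            + max (2 * r / (2 - r)) (2 * r * (1 - r)) * ((2 * c) * Sa) :=
          add_le_add (mul_le_mul_of_nonneg_right hM1 ht1) (mul_le_mul_of_nonneg_right hM2 ht2)
      _ = max (2 * r / (2 - r)) (2 * r * (1 - r)) * VR P₁ P₂ r f := by
          rw [hVRval]; ring
  refine ⟨main, ?_⟩
  intro τ hτ
  have hMle : max (2 * r / (2 - r)) (2 * r * (1 - r)) ≤ 2 * r := by
    apply max_le
    · rw [div_le_iff₀ (by linarith : (0:ℝ) < 2 - r)]; nlinarith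
    · nlinarith
  have step1 : VDdag P₁ P₂ τ f ≤ ((1+τ)/2) * (max (2 * r / (2 - r)) (2 * r * (1 - r)) * VR P₁ P₂ r f) := by
    rw [VDdag]
    exact mul_le_mul_of_nonneg_left main (by linarith)
  have step2 : ((1+τ)/2) * (max (2 * r / (2 - r)) (2 * r * (1 - r)) * VR P₁ P₂ r f)
      ≤ ((1+τ)/2) * ((2*r) * VR P₁ P₂ r f) := by
    apply mul_le_mul_of_nonneg_left _ (by linarith)
    exact mul_le_mul_of_nonneg_right hMle hVRnn
  have step3 : ((1+τ)/2) * ((2*r) * VR P₁ P₂ r f) ≤ ((τ + 1) / τ) * VRdag P₁ P₂ r τ f := by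
    rw [VRdag]
    have hsc : ((1+τ)/2) * (2*r) ≤ ((τ+1)/τ) * (r*τ+1-r) := by
      have key : ((τ+1)/τ) * (r*τ+1-r) - ((1+τ)/2)*(2*r) = (τ+1)*(1-r)/τ := by
        field_simp; ring
      have h2 : (0:ℝ) ≤ (τ+1)*(1-r)/τ := div_nonneg (by nlinarith) hτ.le
      linarith
    calc ((1+τ)/2) * ((2*r) * VR P₁ P₂ r f) = (((1+τ)/2) * (2*r)) * VR P₁ P₂ r f := by ring
      _ ≤ (((τ+1)/τ) * (r*τ+1-r)) * VR P₁ P₂ r f := mul_le_mul_of_nonneg_right hsc hVRnn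
      _ = ((τ+1)/τ) * ((r*τ+1-r) * VR P₁ P₂ r f) := by ring
  linarith [step1, step2, step3]
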